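/- Let p be a polynomial of degree n with complex coefficients, a_n ≠ 0, and let k be the smallest positive integer with a_{n-k} ≠ 0 (assume some such k exists). Then ρ[(a_n z^k − a_{n-k}) p(z)] ≤ ρ[p], where ρ[·] denotes the Cauchy radius. -/

import Mathlib

open Polynomial

/-- The function whose unique positive root is the Cauchy radius of `q`. -/
noncomputable def cauchyFun (q : Polynomial ℂ) (x : ℝ) : ℝ :=
  ‖q.leadingCoeff‖ * x ^ q.natDegree
    - ∑ j ∈ Finset.range q.natDegree, ‖q.coeff j‖ * x ^ j

/-- Rahman–Schmeisser: `ρ[(aₙ z^k - a_{n-k}) p(z)] ≤ ρ[p]`, where `k` is the smallest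
positive integer with `a_{n-k} ≠ 0`. -/
theorem rahman_schmeisser_improved_cauchy_radius
    (p : Polynomial ℂ) (n : ℕ) (hp : p ≠ 0) (hn : p.natDegree = n)
    (k : ℕ) (hk : 0 < k) (hkn : k ≤ n)
    (hknz : p.coeff (n - k) ≠ 0)
    (hkmin : ∀ j, 0 < j → j < k → p.coeff (n - j) = 0)
    (x y : ℝ) (hx : 0 < x) (hy : 0 < y)
    (hxroot : cauchyFun ((C (p.coeff n) * X ^ k - C (p.coeff (n - k))) * p) x = 0)
    (hyroot : cauchyFun p y = 0) :
    x ≤ y := by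
  set a := p.coeff n with ha_def
  set b := p.coeff (n - k) with hb_def
  set f : Polynomial ℂ := C a * X ^ k - C b with hf_def
  set q : Polynomial ℂ := f * p with hq_def
  have ha : a ≠ 0 := by
    rw [ha_def, ← hn]
    exact leadingCoeff_ne_zero.mpr hp
  have hplc : p.leadingCoeff = a := by rw [ha_def, ← hn]; rfl
  have hdf : f.natDegree = k := by
    rw [hf_def]
    rw [natDegree_sub_eq_left_of_natDegree_lt]
    · exact natDegree_C_mul_X_pow k a ha
    · rw [natDegree_C_mul_X_pow k a ha, natDegree_C]; exact hk
  have hf0 : f ≠ 0 := by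
    intro h
    rw [h, natDegree_zero] at hdf
    omega
  have hflc : f.leadingCoeff = a := by
    rw [Polynomial.leadingCoeff, hdf, hf_def, coeff_sub, coeff_C,
      if_neg hk.ne', coeff_C_mul, coeff_X_pow, if_pos rfl]
    ring
  have hqd : q.natDegree = k + n := by
    rw [hq_def, natDegree_mul hf0 hp, hdf, hn]
  have hql : q.leadingCoeff = a * a := by
    rw [hq_def, leadingCoeff_mul, hflc, hplc]
  have hqc : ∀ j, q.coeff j
      = a * (if k ≤ j then p.coeff (j - k) else 0) - b * p.coeff j := by
    intro j
    have hqe : q = C a * (p * X ^ k) - C b * p := by rw [hq_def, hf_def]; ring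
    rw [hqe, coeff_sub, coeff_C_mul, coeff_C_mul, coeff_mul_X_pow']
  set m := k + n with hm_def
  -- the sum identity at y for p
  have hSp : ∑ j ∈ Finset.range n, ‖p.coeff j‖ * y ^ j
      = ‖a‖ * y ^ n := by
    rw [cauchyFun, hplc, hn] at hyroot
    linarith
  -- split the range n sum at n - k
  have hIco : ∑ i ∈ Finset.Ico (n - k) n, ‖p.coeff i‖ * y ^ i
      = ‖b‖ * y ^ (n - k) := by
    have hz : ∀ i ∈ Finset.Ico (n - k) n, i ≠ n - k →
        ‖p.coeff i‖ * y ^ i = 0 := by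
      intro i hi hne
      simp only [Finset.mem_Ico] at hi
      have hz0 : p.coeff i = 0 := by
        have h2 : i = n - (n - i) := by omega
        rw [h2]; exact hkmin (n - i) (by omega) (by omega)
      rw [hz0]; simp
    rw [Finset.sum_eq_single_of_mem (n - k)
      (by simp only [Finset.mem_Ico]; omega) hz, ← hb_def]
  have hsplit : ∑ i ∈ Finset.range n, ‖p.coeff i‖ * y ^ i
      = (∑ i ∈ Finset.range (n - k), ‖p.coeff i‖ * y ^ i)
        + ‖b‖ * y ^ (n - k) := by
    rw [Finset.range_eq_Ico,
      ← Finset.sum_Ico_consecutive _ (Nat.zero_le (n - k)) (Nat.sub_le n k),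
      hIco, ← Finset.range_eq_Ico]
  have hlow : ∑ i ∈ Finset.range (n - k), ‖p.coeff i‖ * y ^ i
      = ‖a‖ * y ^ n - ‖b‖ * y ^ (n - k) := by
    rw [hsplit] at hSp
    linarith
  -- the shifted sum
  have hshift : ∑ j ∈ Finset.range n,
      (if k ≤ j then ‖p.coeff (j - k)‖ else 0) * y ^ j
      = y ^ k * ∑ i ∈ Finset.range (n - k), ‖p.coeff i‖ * y ^ i := by
    rw [Finset.range_eq_Ico, ← Finset.sum_Ico_consecutive _ (Nat.zero_le k) hkn]
    have h1 : ∑ j ∈ Finset.Ico 0 k,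
        (if k ≤ j then ‖p.coeff (j - k)‖ else 0) * y ^ j = 0 := by
      apply Finset.sum_eq_zero
      intro j hj
      simp only [Finset.mem_Ico] at hj
      rw [if_neg (by omega)]
      ring
    rw [h1, zero_add, Finset.sum_Ico_eq_sum_range, Finset.mul_sum,
      Finset.range_eq_Ico]
    apply Finset.sum_congr rfl
    intro i hi
    rw [if_pos (Nat.le_add_right k i)]
    have h2 : k + i - k = i := by omega
    rw [h2, pow_add]
    ring
  -- drop the top part of the range m sum for q
  have hstep1 : ∑ j ∈ Finset.range m, ‖q.coeff j‖ * y ^ j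
      = ∑ j ∈ Finset.range n, ‖q.coeff j‖ * y ^ j := by
    rw [← Finset.sum_subset (Finset.range_subset_range.mpr (by omega : n ≤ m))]
    intro j hj hjn
    simp only [Finset.mem_range] at hj hjn
    push_neg at hjn
    have hq0 : q.coeff j = 0 := by
      rw [hqc j, if_pos (le_trans hkn hjn)]
      by_cases hje : j = n
      · subst hje
        rw [← hb_def, ← ha_def]
        ring
      · have hjgt : n < j := by omega
        have h1 : p.coeff (j - k) = 0 := by
          have h2 : j - k = n - (n + k - j) := by omega
          rw [h2]; exact hkmin (n + k - j) (by omega) (by omega)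
        have h3 : p.coeff j = 0 := by
          apply coeff_eq_zero_of_natDegree_lt
          omega
        rw [h1, h3]
        ring
    rw [hq0]
    simp
  -- termwise triangle inequality bound
  have hstep2 : ∑ j ∈ Finset.range n, ‖q.coeff j‖ * y ^ j
      ≤ ∑ j ∈ Finset.range n,
          (‖a‖ * (if k ≤ j then ‖p.coeff (j - k)‖ else 0)
            + ‖b‖ * ‖p.coeff j‖) * y ^ j := by
    apply Finset.sum_le_sum
    intro j hj
    apply mul_le_mul_of_nonneg_right _ (le_of_lt (pow_pos hy j))
    rw [hqc j]
    calc ‖a * (if k ≤ j then p.coeff (j - k) else 0) - b * p.coeff j‖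
        ≤ ‖a * (if k ≤ j then p.coeff (j - k) else 0)‖
          + ‖b * p.coeff j‖ := by
          simpa using norm_sub_le
            (a * (if k ≤ j then p.coeff (j - k) else 0)) (b * p.coeff j)
      _ = ‖a‖ * (if k ≤ j then ‖p.coeff (j - k)‖ else 0)
          + ‖b‖ * ‖p.coeff j‖ := by
          rw [norm_mul, norm_mul, apply_ite (norm : ℂ → ℝ), norm_zero]
  -- distribute and evaluate
  have hFy : ∑ j ∈ Finset.range m, ‖q.coeff j‖ * y ^ j
      ≤ ‖a * a‖ * y ^ m := by
    rw [hstep1]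
    calc ∑ j ∈ Finset.range n, ‖q.coeff j‖ * y ^ j
        ≤ ∑ j ∈ Finset.range n,
          (‖a‖ * (if k ≤ j then ‖p.coeff (j - k)‖ else 0)
            + ‖b‖ * ‖p.coeff j‖) * y ^ j := hstep2
      _ = ‖a‖ * (∑ j ∈ Finset.range n,
            (if k ≤ j then ‖p.coeff (j - k)‖ else 0) * y ^ j)
          + ‖b‖ * ∑ j ∈ Finset.range n,
            ‖p.coeff j‖ * y ^ j := by
          rw [Finset.mul_sum, Finset.mul_sum, ← Finset.sum_add_distrib]
          apply Finset.sum_congr rfl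
          intro j hj
          ring
      _ = ‖a * a‖ * y ^ m := by
          rw [hshift, hlow, hSp, norm_mul, hm_def]
          have hyk : y ^ k * y ^ (n - k) = y ^ n := by
            rw [← pow_add]
            congr 1
            omega
          rw [pow_add]
          linear_combination (-(‖a‖ * ‖b‖)) * hyk
  -- now the comparison argument
  by_contra hcon
  push_neg at hcon
  have hxs : ∑ j ∈ Finset.range m, ‖q.coeff j‖ * x ^ j
      = ‖a * a‖ * x ^ m := by
    rw [cauchyFun, hqd, hql] at hxroot
    linarith
  have haa : ‖a * a‖ ≠ 0 := by
    simp [map_mul, ha]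
  have hpos : 0 < ‖a * a‖ * x ^ m :=
    mul_pos (norm_pos_iff.mpr (mul_ne_zero ha ha)) (pow_pos hx m)
  have hex : ∃ j ∈ Finset.range m, ‖q.coeff j‖ * x ^ j ≠ 0 := by
    by_contra hall
    push_neg at hall
    rw [Finset.sum_eq_zero hall] at hxs
    exact absurd hxs.symm (ne_of_gt hpos)
  obtain ⟨j0, hj0m, hj0⟩ := hex
  have hj0pos : 0 < ‖q.coeff j0‖ := by
    rcases lt_or_eq_of_le (norm_nonneg (q.coeff j0)) with h | h
    · exact h
    · exact absurd (by rw [← h]; ring) hj0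
  have hstrict : ∑ j ∈ Finset.range m, ‖q.coeff j‖ * x ^ j * y ^ m
      < ∑ j ∈ Finset.range m, ‖q.coeff j‖ * y ^ j * x ^ m := by
    apply Finset.sum_lt_sum
    · intro j hj
      simp only [Finset.mem_range] at hj
      have hym : y ^ m = y ^ j * y ^ (m - j) := by rw [← pow_add]; congr 1; omega
      have hxm : x ^ m = x ^ j * x ^ (m - j) := by rw [← pow_add]; congr 1; omega
      rw [hym, hxm]
      have h1 : y ^ (m - j) ≤ x ^ (m - j) := pow_le_pow_left₀ hy.le hcon.le _
      have h2 : (0:ℝ) ≤ ‖q.coeff j‖ * x ^ j * y ^ j := by positivity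
      nlinarith [pow_pos hx j, pow_pos hy j, norm_nonneg (q.coeff j)]
    · refine ⟨j0, hj0m, ?_⟩
      simp only [Finset.mem_range] at hj0m
      have hym : y ^ m = y ^ j0 * y ^ (m - j0) := by rw [← pow_add]; congr 1; omega
      have hxm : x ^ m = x ^ j0 * x ^ (m - j0) := by rw [← pow_add]; congr 1; omega
      rw [hym, hxm]
      have h1 : y ^ (m - j0) < x ^ (m - j0) :=
        pow_lt_pow_left₀ hcon hy.le (by omega)
      have h2 : 0 < ‖q.coeff j0‖ * x ^ j0 * y ^ j0 :=
        mul_pos (mul_pos hj0pos (pow_pos hx j0)) (pow_pos hy j0)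
      have h3 := mul_lt_mul_of_pos_left h1 h2
      calc ‖q.coeff j0‖ * x ^ j0 * (y ^ j0 * y ^ (m - j0))
          = ‖q.coeff j0‖ * x ^ j0 * y ^ j0 * y ^ (m - j0) := by ring
        _ < ‖q.coeff j0‖ * x ^ j0 * y ^ j0 * x ^ (m - j0) := h3
        _ = ‖q.coeff j0‖ * y ^ j0 * (x ^ j0 * x ^ (m - j0)) := by
            ring
  rw [← Finset.sum_mul, ← Finset.sum_mul, hxs] at hstrict
  have hle : (∑ j ∈ Finset.range m, ‖q.coeff j‖ * y ^ j) * x ^ m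
      ≤ ‖a * a‖ * y ^ m * x ^ m :=
    mul_le_mul_of_nonneg_right hFy (le_of_lt (pow_pos hx m))
  have heq : ‖a * a‖ * x ^ m * y ^ m
      = ‖a * a‖ * y ^ m * x ^ m := by ring
  linarith
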